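/- If φ is uniformly distributed on [-π, π] and d(0) < l_max < d(π) where d(φ)² = R_LEO² + R_GEO² - 2R_LEO R_GEO(sin θ sin Θ cos φ + cos θ cos Θ) with R_LEO, R_GEO > 0 and θ, Θ ∈ (0,π), then P[d(φ) ≤ l_max] = (1/π) · arccos((R_LEO² + R_GEO² - l_max²)/(2R_LEO R_GEO sin θ sin Θ) - cos θ cos Θ / (sin θ sin Θ)). -/

import Mathlib

open Real MeasureTheory

/-- If `φ` is uniform on `[-π, π]` and `d(0) < l_max < d(π)` where
`d(φ) = sqrt(R_LEO² + R_GEO² - 2R_LEO R_GEO(sin θ sin Θ cos φ + cos θ cos Θ))` with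
`R_LEO, R_GEO > 0` and `θ, Θ ∈ (0, π)`, then
`P[d(φ) ≤ l_max] = (1/π) arccos((R_LEO² + R_GEO² - l_max²)/(2R_LEO R_GEO sin θ sin Θ)
  - cos θ cos Θ / (sin θ sin Θ))`. -/
theorem stmt6 (RLEO RGEO θ Θ lmax : ℝ) (hL : 0 < RLEO) (hG : 0 < RGEO)
    (hθ : θ ∈ Set.Ioo (0 : ℝ) π) (hΘ : Θ ∈ Set.Ioo (0 : ℝ) π)
    (d : ℝ → ℝ)
    (hd : ∀ φ, d φ = Real.sqrt (RLEO ^ 2 + RGEO ^ 2 -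
        2 * RLEO * RGEO * (Real.sin θ * Real.sin Θ * Real.cos φ + Real.cos θ * Real.cos Θ)))
    (h0 : d 0 < lmax) (hπ : lmax < d π) :
    (volume {φ : ℝ | φ ∈ Set.Icc (-π) π ∧ d φ ≤ lmax}).toReal / (2 * π)
      = (1 / π) * Real.arccos
          ((RLEO ^ 2 + RGEO ^ 2 - lmax ^ 2) / (2 * RLEO * RGEO * Real.sin θ * Real.sin Θ)
            - Real.cos θ * Real.cos Θ / (Real.sin θ * Real.sin Θ)) := by
  have hs1 : 0 < Real.sin θ := Real.sin_pos_of_pos_of_lt_pi hθ.1 hθ.2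
  have hs2 : 0 < Real.sin Θ := Real.sin_pos_of_pos_of_lt_pi hΘ.1 hΘ.2
  set A : ℝ := (RLEO ^ 2 + RGEO ^ 2 - lmax ^ 2) / (2 * RLEO * RGEO * Real.sin θ * Real.sin Θ)
            - Real.cos θ * Real.cos Θ / (Real.sin θ * Real.sin Θ) with hA
  have hK : 0 < 2 * RLEO * RGEO * Real.sin θ * Real.sin Θ := by positivity
  have hlpos : 0 < lmax := lt_of_le_of_lt (hd 0 ▸ Real.sqrt_nonneg _) h0
  -- key equivalence
  have hA' : A = (RLEO ^ 2 + RGEO ^ 2 - lmax ^ 2 - 2 * RLEO * RGEO * (Real.cos θ * Real.cos Θ))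
      / (2 * RLEO * RGEO * Real.sin θ * Real.sin Θ) := by
    rw [hA]; field_simp
  -- key equivalence
  have hiff : ∀ φ : ℝ, d φ ≤ lmax ↔ A ≤ Real.cos φ := by
    intro φ
    rw [hd φ, Real.sqrt_le_iff, hA', div_le_iff₀ hK]
    constructor
    · rintro ⟨-, h⟩; nlinarith [h]
    · intro h; exact ⟨hlpos.le, by nlinarith [h]⟩
  -- strict bounds on A
  have hA1 : A < 1 := by
    have := h0
    rw [hd 0, Real.sqrt_lt' hlpos, Real.cos_zero] at this
    rw [hA', div_lt_iff₀ hK]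
    nlinarith [this]
  have hA2 : -1 < A := by
    have := hπ
    rw [hd π, Real.lt_sqrt hlpos.le, Real.cos_pi] at this
    rw [hA', lt_div_iff₀ hK]
    nlinarith [this]
  have hAc : Real.cos (Real.arccos A) = A := Real.cos_arccos hA2.le hA1.le
  have harc0 : 0 ≤ Real.arccos A := Real.arccos_nonneg A
  have harcπ : Real.arccos A ≤ π := Real.arccos_le_pi A
  -- set equality
  have hset : {φ : ℝ | φ ∈ Set.Icc (-π) π ∧ d φ ≤ lmax}
      = Set.Icc (-(Real.arccos A)) (Real.arccos A) := by
    ext φ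
    simp only [Set.mem_setOf_eq, Set.mem_Icc, hiff φ, ← abs_le]
    constructor
    · rintro ⟨h1, h2⟩
      by_contra h
      push_neg at h
      have : Real.cos |φ| < Real.cos (Real.arccos A) :=
        Real.cos_lt_cos_of_nonneg_of_le_pi harc0 h1 h
      rw [hAc, Real.cos_abs] at this
      linarith
    · intro h
      refine ⟨le_trans h harcπ, ?_⟩
      have : Real.cos (Real.arccos A) ≤ Real.cos |φ| :=
        Real.cos_le_cos_of_nonneg_of_le_pi (abs_nonneg φ) harcπ h
      rw [hAc, Real.cos_abs] at this
      exact this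
  rw [hset, Real.volume_Icc, ENNReal.toReal_ofReal (by linarith)]
  have hπpos := Real.pi_pos
  field_simp
  ring
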